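/- Let A be a 2×2 real symmetric matrix. Then min over orthonormal pairs (ν, ν^⊥) of { (ν^T A ν)⁺ (ν^{⊥T} A ν^⊥)⁺ − (ν^T A ν)⁻ − (ν^{⊥T} A ν^⊥)⁻ } equals det A if A is positive semidefinite, and is strictly negative if A is not positive semidefinite. -/

import Mathlib

open Matrix

lemma exists_eig (a b c : ℝ) : ∃ x y : ℝ, x^2 + y^2 = 1 ∧ (a - c) * x * y = b * (x^2 - y^2) := by
  set p : ℝ := a - c with hp
  set q : ℝ := 2 * b with hq
  set r : ℝ := Real.sqrt (p^2 + q^2) with hr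
  have hr2 : r^2 = p^2 + q^2 := Real.sq_sqrt (by positivity)
  have hrnn : 0 ≤ r := Real.sqrt_nonneg _
  rcases eq_or_lt_of_le hrnn with h0 | hrpos
  · have : p^2 + q^2 = 0 := by rw [← hr2, ← h0]; ring
    have hp0 : p = 0 := by nlinarith [sq_nonneg p, sq_nonneg q]
    have hq0 : q = 0 := by nlinarith [sq_nonneg p, sq_nonneg q]
    have hb0 : b = 0 := by linarith [hq0]
    exact ⟨1, 0, by ring, by rw [hb0]; simp [← hp, hp0]⟩
  · have hrp : 0 ≤ r + p := by nlinarith [sq_nonneg q]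
    rcases eq_or_lt_of_le hrp with h1 | h1
    · have hq0 : q = 0 := by nlinarith [sq_nonneg q]
      have hb0 : b = 0 := by linarith
      refine ⟨0, 1, by ring, ?_⟩
      rw [hb0]; ring
    · set x : ℝ := Real.sqrt ((r + p) / (2 * r)) with hx
      have hxpos : 0 < x := Real.sqrt_pos.mpr (by positivity)
      have hx2 : x^2 = (r + p) / (2 * r) := Real.sq_sqrt (by positivity)
      set y : ℝ := q / (2 * r * x) with hy
      have hq2 : q^2 = (r - p) * (r + p) := by nlinarith
      have hy2 : y^2 = (r - p) / (2 * r) := by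
        rw [hy, div_pow, mul_pow, mul_pow, hx2]
        field_simp
        linear_combination hq2
      refine ⟨x, y, by rw [hx2, hy2]; field_simp; ring, ?_⟩
      have hxy : x * y = q / (2 * r) := by
        rw [hy]; field_simp
      have hd : x^2 - y^2 = p / r := by
        rw [hx2, hy2]; field_simp; ring
      rw [hd, mul_assoc, hxy]
      have hb2 : b = q / 2 := by rw [hq]; ring
      rw [hb2]
      field_simp

theorem stmt19 (A : Matrix (Fin 2) (Fin 2) ℝ) (hA : A.IsSymm)
    (Q : (Fin 2 → ℝ) → ℝ) (hQ : ∀ ν, Q ν = ν ⬝ᵥ A.mulVec ν)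
    (pp : (Fin 2 → ℝ) → (Fin 2 → ℝ)) (hpp : ∀ ν, pp ν = ![-(ν 1), ν 0])
    (Op : ℝ)
    (hOp : Op = sInf {t | ∃ ν : Fin 2 → ℝ, (ν 0) ^ 2 + (ν 1) ^ 2 = 1 ∧
      t = max (Q ν) 0 * max (Q (pp ν)) 0 - max (-(Q ν)) 0 - max (-(Q (pp ν))) 0}) :
    (A.PosSemidef → Op = A.det) ∧ (¬ A.PosSemidef → Op < 0) := by
  set a : ℝ := A 0 0 with ha
  set b : ℝ := A 0 1 with hb
  set c : ℝ := A 1 1 with hc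
  have hb' : A 1 0 = b := hA.apply 0 1
  -- explicit formula for Q
  have hQ' : ∀ ν : Fin 2 → ℝ, Q ν = a * (ν 0)^2 + 2 * b * (ν 0) * (ν 1) + c * (ν 1)^2 := by
    intro ν
    rw [hQ]
    simp [dotProduct, Matrix.mulVec, Fin.sum_univ_two, hb']
    ring
  have hQp : ∀ ν : Fin 2 → ℝ,
      Q (pp ν) = a * (ν 1)^2 - 2 * b * (ν 0) * (ν 1) + c * (ν 0)^2 := by
    intro ν
    rw [hpp, hQ']
    simp
    ring
  have hdet : A.det = a * c - b * b := by
    rw [Matrix.det_fin_two, hb']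
  -- the key algebraic identity
  have key : ∀ ν : Fin 2 → ℝ, (ν 0)^2 + (ν 1)^2 = 1 →
      Q ν * Q (pp ν) = A.det + ((a - c) * (ν 0) * (ν 1) - b * ((ν 0)^2 - (ν 1)^2))^2 := by
    intro ν hν
    rw [hQ', hQp, hdet]
    set x := ν 0; set y := ν 1
    linear_combination (a*c - b*b) * (x^2 + y^2 + 1) * hν
  set S : Set ℝ := {t | ∃ ν : Fin 2 → ℝ, (ν 0) ^ 2 + (ν 1) ^ 2 = 1 ∧
      t = max (Q ν) 0 * max (Q (pp ν)) 0 - max (-(Q ν)) 0 - max (-(Q (pp ν))) 0} with hS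
  -- bounded below
  have hK : ∀ ν : Fin 2 → ℝ, (ν 0)^2 + (ν 1)^2 = 1 → |Q ν| ≤ |a| + |b| + |c| := by
    intro ν hν
    rw [hQ', abs_le]
    constructor <;>
      nlinarith [le_abs_self a, neg_abs_le a, le_abs_self b, neg_abs_le b,
        le_abs_self c, neg_abs_le c, sq_nonneg (ν 0 + ν 1), sq_nonneg (ν 0 - ν 1),
        sq_nonneg (ν 0), sq_nonneg (ν 1), abs_nonneg a, abs_nonneg b, abs_nonneg c]
  have hKp : ∀ ν : Fin 2 → ℝ, (ν 0)^2 + (ν 1)^2 = 1 → |Q (pp ν)| ≤ |a| + |b| + |c| := by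
    intro ν hν
    have h2 : ((pp ν) 0)^2 + ((pp ν) 1)^2 = 1 := by
      rw [hpp]; simp; linarith [hν]
    have := hK (pp ν) h2
    exact this
  have hbdd : BddBelow S := by
    refine ⟨-(2 * (|a| + |b| + |c|)), ?_⟩
    rintro t ⟨ν, hν, rfl⟩
    have h1 := hK ν hν
    have h2 := hKp ν hν
    have hm1 : max (-(Q ν)) 0 ≤ |a| + |b| + |c| := by
      apply max_le
      · calc -(Q ν) ≤ |Q ν| := neg_le_abs _
          _ ≤ _ := h1
      · positivity
    have hm2 : max (-(Q (pp ν))) 0 ≤ |a| + |b| + |c| := by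
      apply max_le
      · calc -(Q (pp ν)) ≤ |Q (pp ν)| := neg_le_abs _
          _ ≤ _ := h2
      · positivity
    have hprod : 0 ≤ max (Q ν) 0 * max (Q (pp ν)) 0 :=
      mul_nonneg (le_max_right _ _) (le_max_right _ _)
    linarith
  constructor
  · -- PSD case
    intro hpsd
    have hQnn : ∀ x : Fin 2 → ℝ, 0 ≤ Q x := by
      intro x
      rw [hQ x]
      simpa using hpsd.dotProduct_mulVec_nonneg x
    -- lower bound
    have hlb : ∀ t ∈ S, A.det ≤ t := by
      rintro t ⟨ν, hν, rfl⟩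
      have h1 := hQnn ν
      have h2 := hQnn (pp ν)
      have hmax1 : max (Q ν) 0 = Q ν := max_eq_left h1
      have hmax2 : max (Q (pp ν)) 0 = Q (pp ν) := max_eq_left h2
      have hneg1 : max (-(Q ν)) 0 = 0 := max_eq_right (by linarith)
      have hneg2 : max (-(Q (pp ν))) 0 = 0 := max_eq_right (by linarith)
      rw [hmax1, hmax2, hneg1, hneg2, key ν hν]
      nlinarith [sq_nonneg ((a - c) * (ν 0) * (ν 1) - b * ((ν 0)^2 - (ν 1)^2))]
    -- attainment via eigenvector
    obtain ⟨x, y, hxy1, hxy2⟩ := exists_eig a b c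
    set ν : Fin 2 → ℝ := ![x, y] with hν
    have hν0 : ν 0 = x := rfl
    have hν1 : ν 1 = y := rfl
    have hunit : (ν 0)^2 + (ν 1)^2 = 1 := by rw [hν0, hν1]; exact hxy1
    have hval : max (Q ν) 0 * max (Q (pp ν)) 0 - max (-(Q ν)) 0 - max (-(Q (pp ν))) 0
        = A.det := by
      have h1 := hQnn ν
      have h2 := hQnn (pp ν)
      rw [max_eq_left h1, max_eq_left h2, max_eq_right (by linarith : -(Q ν) ≤ 0),
        max_eq_right (by linarith : -(Q (pp ν)) ≤ 0), key ν hunit]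
      have : (a - c) * (ν 0) * (ν 1) - b * ((ν 0)^2 - (ν 1)^2) = 0 := by
        rw [hν0, hν1]; linarith [hxy2]
      rw [this]
      ring
    have hmem : A.det ∈ S := ⟨ν, hunit, hval.symm⟩
    rw [hOp]
    exact le_antisymm (csInf_le hbdd hmem) (le_csInf ⟨A.det, hmem⟩ hlb)
  · -- non-PSD case
    intro hnpsd
    have hherm : A.IsHermitian := by
      ext i j
      rw [Matrix.conjTranspose_apply, star_trivial]
      exact hA.apply i j
    rw [Matrix.posSemidef_iff_dotProduct_mulVec] at hnpsd
    push_neg at hnpsd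
    obtain ⟨x, hx⟩ := hnpsd hherm
    have hQx : Q x < 0 := by
      rw [hQ x]
      simpa using hx
    have hs : 0 < (x 0)^2 + (x 1)^2 := by
      rcases lt_or_eq_of_le (by positivity : (0:ℝ) ≤ (x 0)^2 + (x 1)^2) with h | h
      · exact h
      · exfalso
        have h0 : x 0 = 0 := by nlinarith [sq_nonneg (x 0), sq_nonneg (x 1)]
        have h1 : x 1 = 0 := by nlinarith [sq_nonneg (x 0), sq_nonneg (x 1)]
        rw [hQ' x, h0, h1] at hQx
        norm_num at hQx
    set s : ℝ := Real.sqrt ((x 0)^2 + (x 1)^2) with hsdef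
    have hspos : 0 < s := Real.sqrt_pos.mpr hs
    have hs2 : s^2 = (x 0)^2 + (x 1)^2 := Real.sq_sqrt (le_of_lt hs)
    set ν : Fin 2 → ℝ := ![x 0 / s, x 1 / s] with hν
    have hν0 : ν 0 = x 0 / s := rfl
    have hν1 : ν 1 = x 1 / s := rfl
    have hunit : (ν 0)^2 + (ν 1)^2 = 1 := by
      rw [hν0, hν1, div_pow, div_pow, ← add_div, hs2, div_self (ne_of_gt hs)]
    have hQν : Q ν < 0 := by
      rw [hQ' ν, hν0, hν1]
      have hexp : a * (x 0 / s)^2 + 2 * b * (x 0 / s) * (x 1 / s) + c * (x 1 / s)^2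
          = (a * (x 0)^2 + 2 * b * (x 0) * (x 1) + c * (x 1)^2) / s^2 := by
        field_simp
      rw [hexp]
      apply div_neg_of_neg_of_pos
      · rw [hQ' x] at hQx; exact hQx
      · positivity
    have hmem : (max (Q ν) 0 * max (Q (pp ν)) 0 - max (-(Q ν)) 0 - max (-(Q (pp ν))) 0) ∈ S :=
      ⟨ν, hunit, rfl⟩
    have ht0neg : max (Q ν) 0 * max (Q (pp ν)) 0 - max (-(Q ν)) 0 - max (-(Q (pp ν))) 0 < 0 := by
      rw [max_eq_right (le_of_lt hQν)]
      have h1 : -(Q ν) ≤ max (-(Q ν)) 0 := le_max_left _ _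
      have h2 : (0:ℝ) ≤ max (-(Q (pp ν))) 0 := le_max_right _ _
      linarith
    rw [hOp]
    exact lt_of_le_of_lt (csInf_le hbdd hmem) ht0neg
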